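/- A 1-Lipschitz measure-preserving function F : Z_p^k → Z_p^k is ergodic with respect to the normalized Haar measure if and only if for every n ≥ 1 the induced map F mod p^n on (Z/p^n Z)^k is a permutation consisting of a single cycle (i.e., F is transitive modulo p^n). -/

import Mathlib

open MeasureTheory
open scoped ENNReal

variable {p : ℕ}

/-- The `i`-th base-`p` digit of a `p`-adic integer. -/
noncomputable def padicDigit [Fact p.Prime] (x : ℤ_[p]) (i : ℕ) : ℕ :=
  (x.appr (i + 1) - x.appr i) / p ^ i

/-- Congruence modulo `p^n` on `ℤ_[p]`. -/
def CongMod [Fact p.Prime] (n : ℕ) (x y : ℤ_[p]) : Prop :=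
  PadicInt.toZModPow n x = PadicInt.toZModPow n y

/-- Coordinatewise congruence modulo `p^n` on `ℤ_[p]^k`. -/
def CongModVec [Fact p.Prime] {k : ℕ} (n : ℕ) (x y : Fin k → ℤ_[p]) : Prop :=
  ∀ i, CongMod n (x i) (y i)

/-- Coordinatewise reduction `ℤ_[p]^k → (ℤ/p^n ℤ)^k`. -/
noncomputable def redVec [Fact p.Prime] {k : ℕ} (n : ℕ) (x : Fin k → ℤ_[p]) : Fin k → ZMod (p ^ n) :=
  fun i => PadicInt.toZModPow n (x i)

/-- The digit-interleaving map `H_k : ℤ_[p]^k → ℤ_[p]`. -/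
noncomputable def Hk [Fact p.Prime] (k : ℕ) (hk : 0 < k) (x : Fin k → ℤ_[p]) : ℤ_[p] :=
  ∑' m : ℕ, (padicDigit (x ⟨m % k, Nat.mod_lt m hk⟩) (m / k) : ℤ_[p]) * (p : ℤ_[p]) ^ m

/-- `F` is transitive modulo `p^n`: the induced map on `(ℤ/p^n ℤ)^k` is a single cycle. -/
def IsTransitiveModVec [Fact p.Prime] {k : ℕ}
    (F : (Fin k → ℤ_[p]) → (Fin k → ℤ_[p])) (n : ℕ) : Prop :=
  ∀ x y : Fin k → ℤ_[p], ∃ j : ℕ, CongModVec n (F^[j] x) y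

/-- `G` is transitive modulo `p^n`: the induced map on `ℤ/p^n ℤ` is a single cycle. -/
def IsTransitiveModZ [Fact p.Prime] (G : ℤ_[p] → ℤ_[p]) (n : ℕ) : Prop :=
  ∀ x y : ℤ_[p], ∃ j : ℕ, CongMod n (G^[j] x) y

noncomputable instance [Fact p.Prime] : MeasurableSpace ℤ_[p] := borel _
instance [Fact p.Prime] : BorelSpace ℤ_[p] := ⟨rfl⟩

/-- The normalized Haar measure on `ℤ_[p]`. -/
noncomputable def haarZ [Fact p.Prime] : Measure ℤ_[p] :=
  Measure.addHaarMeasure (⊤ : TopologicalSpace.PositiveCompacts ℤ_[p])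

/-- The normalized Haar measure on `ℤ_[p]^k`. -/
noncomputable def haarZk [Fact p.Prime] (k : ℕ) : Measure (Fin k → ℤ_[p]) :=
  Measure.addHaarMeasure (⊤ : TopologicalSpace.PositiveCompacts (Fin k → ℤ_[p]))

section basics
variable [Fact p.Prime] {k n : ℕ}

lemma congMod_iff_norm (n : ℕ) (x y : ℤ_[p]) :
    CongMod n x y ↔ ‖x - y‖ ≤ (p : ℝ) ^ (-(n:ℤ)) := by
  rw [CongMod, PadicInt.norm_le_pow_iff_mem_span_pow, ← PadicInt.ker_toZModPow,
    RingHom.mem_ker, map_sub, sub_eq_zero]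

lemma congModVec_iff_dist (n : ℕ) (x y : Fin k → ℤ_[p]) :
    CongModVec n x y ↔ dist x y ≤ (p : ℝ) ^ (-(n:ℤ)) := by
  rw [dist_pi_le_iff (by positivity)]
  refine forall_congr' fun i => ?_
  rw [congMod_iff_norm, dist_eq_norm]

lemma congModVec_iff_redVec (n : ℕ) (x y : Fin k → ℤ_[p]) :
    CongModVec n x y ↔ redVec n x = redVec n y := by
  rw [funext_iff]; rfl

lemma congMod_mono {m : ℕ} (h : n ≤ m) {x y : ℤ_[p]} (hc : CongMod m x y) : CongMod n x y := by
  rw [congMod_iff_norm] at hc ⊢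
  refine hc.trans (zpow_le_zpow_right₀ ?_ ?_)
  · exact_mod_cast (Fact.out : p.Prime).one_lt.le
  · simp [neg_le_neg, h]

end basics

section V
variable [Fact p.Prime] {k n : ℕ}

example : SecondCountableTopology (Fin k → ℤ_[p]) := inferInstance
example : BorelSpace (Fin k → ℤ_[p]) := inferInstance
example : Measure.IsAddLeftInvariant (haarZk (p:=p) k) := by
  unfold haarZk; infer_instance

lemma haarZk_univ : haarZk (p:=p) k Set.univ = 1 := by
  have := Measure.addHaarMeasure_self (K₀ := (⊤ : TopologicalSpace.PositiveCompacts (Fin k → ℤ_[p])))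
  rw [TopologicalSpace.PositiveCompacts.coe_top] at this
  exact this

def Vset [Fact p.Prime] {k : ℕ} (n : ℕ) (c : Fin k → ZMod (p ^ n)) : Set (Fin k → ℤ_[p]) :=
  redVec n ⁻¹' {c}

noncomputable def liftVec [Fact p.Prime] {k : ℕ} {n : ℕ} (c : Fin k → ZMod (p ^ n)) :
    Fin k → ℤ_[p] := fun i => ((c i).val : ℤ_[p])

lemma redVec_liftVec (c : Fin k → ZMod (p ^ n)) : redVec n (liftVec c) = c := by
  funext i
  have : NeZero (p ^ n) := ⟨pow_ne_zero _ (Fact.out : p.Prime).ne_zero⟩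
  simp [redVec, liftVec, map_natCast, ZMod.natCast_zmod_val]

lemma mem_Vset_iff {c : Fin k → ZMod (p ^ n)} {x : Fin k → ℤ_[p]} :
    x ∈ Vset n c ↔ redVec n x = c := Iff.rfl

lemma isOpen_Vset (c : Fin k → ZMod (p ^ n)) : IsOpen (Vset n c) := by
  have : Vset n c = ⋂ i : Fin k, (fun x : Fin k → ℤ_[p] => x i) ⁻¹'
      (PadicInt.toZModPow n ⁻¹' {c i}) := by
    ext x; simp [Vset, redVec, funext_iff, Set.mem_iInter]
  rw [this]
  refine isOpen_iInter_of_finite fun i => ?_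
  refine IsOpen.preimage (continuous_apply i) ?_
  -- fibers of toZModPow are open
  rcases Set.eq_empty_or_nonempty (PadicInt.toZModPow (p := p) n ⁻¹' {c i}) with h | ⟨z, hz⟩
  · rw [h]; exact isOpen_empty
  · have : PadicInt.toZModPow (p := p) n ⁻¹' {c i} = Metric.ball z ((p:ℝ) ^ (-(n:ℤ)+1)) := by
      ext w
      simp only [Set.mem_preimage, Set.mem_singleton_iff, Metric.mem_ball]
      rw [show PadicInt.toZModPow (p:=p) n w = c i ↔ CongMod n w z by
        rw [CongMod, hz], congMod_iff_norm, dist_eq_norm,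
        PadicInt.norm_le_pow_iff_norm_lt_pow_add_one]
    rw [this]; exact Metric.isOpen_ball

lemma measurableSet_Vset (c : Fin k → ZMod (p ^ n)) : MeasurableSet (Vset n c) :=
  (isOpen_Vset c).measurableSet

end V

section Meas
variable [Fact p.Prime] {k : ℕ}

instance : Measure.IsAddLeftInvariant (haarZk (p:=p) k) := by unfold haarZk; infer_instance
instance : IsProbabilityMeasure (haarZk (p:=p) k) := ⟨haarZk_univ⟩

lemma redVec_add (n : ℕ) (a b : Fin k → ℤ_[p]) :
    redVec n (a + b) = redVec n a + redVec n b := by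
  funext i; exact map_add _ _ _

lemma iUnion_Vset (n : ℕ) : ⋃ c : Fin k → ZMod (p^n), Vset n c = Set.univ := by
  ext x
  simp only [Set.mem_iUnion, mem_Vset_iff, Set.mem_univ, iff_true]
  exact ⟨redVec n x, rfl⟩

lemma Vset_disjoint (n : ℕ) :
    Pairwise (Function.onFun Disjoint fun c : Fin k → ZMod (p^n) => Vset n c) := by
  intro c c' hcc'
  refine Set.disjoint_left.mpr fun x hx hx' => hcc' ?_
  rw [mem_Vset_iff] at hx hx'
  rw [← hx, ← hx']

lemma measure_Vset_eq (n : ℕ) (c c' : Fin k → ZMod (p^n)) :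
    haarZk (p:=p) k (Vset n c) = haarZk (p:=p) k (Vset n c') := by
  have key : (fun x => liftVec (c - c') + x) ⁻¹' (Vset n c) = Vset n c' := by
    ext x
    simp only [Set.mem_preimage, mem_Vset_iff, redVec_add, redVec_liftVec]
    constructor
    · intro h
      have := congrArg (fun z => z - (c - c')) h
      simpa [sub_sub_cancel_left, add_sub_cancel_left] using this
    · intro h; rw [h]; ring
  refine Eq.symm ?_
  calc haarZk (p:=p) k (Vset n c')
      = haarZk (p:=p) k ((fun x => liftVec (c - c') + x) ⁻¹' (Vset n c)) := by rw [key]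
    _ = haarZk (p:=p) k (Vset n c) := measure_preimage_add _ _ _

lemma card_mul_measure_Vset (n : ℕ) (c : Fin k → ZMod (p^n)) :
    (Fintype.card (Fin k → ZMod (p^n)) : ℝ≥0∞) * haarZk (p:=p) k (Vset n c) = 1 := by
  have : NeZero (p ^ n) := ⟨pow_ne_zero _ (Fact.out : p.Prime).ne_zero⟩
  have h1 : haarZk (p:=p) k (⋃ c' : Fin k → ZMod (p^n), Vset n c') = 1 := by
    rw [iUnion_Vset]; exact haarZk_univ
  rw [measure_iUnion (Vset_disjoint n) measurableSet_Vset, tsum_fintype] at h1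
  rw [← h1, Finset.sum_congr rfl fun c' _ => measure_Vset_eq n c' c]
  simp [Finset.sum_const, nsmul_eq_mul]

lemma measure_Vset_ne_zero (n : ℕ) (c : Fin k → ZMod (p^n)) :
    haarZk (p:=p) k (Vset n c) ≠ 0 := by
  intro h
  have := card_mul_measure_Vset n c
  rw [h, mul_zero] at this
  exact zero_ne_one this

lemma measure_Vset_ne_top (n : ℕ) (c : Fin k → ZMod (p^n)) :
    haarZk (p:=p) k (Vset n c) ≠ ⊤ :=
  (measure_lt_top _ _).ne

lemma measure_Vset_val (n : ℕ) (c : Fin k → ZMod (p^n)) :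
    haarZk (p:=p) k (Vset n c) = (Fintype.card (Fin k → ZMod (p^n)) : ℝ≥0∞)⁻¹ := by
  have h := card_mul_measure_Vset n c
  have : NeZero (p ^ n) := ⟨pow_ne_zero _ (Fact.out : p.Prime).ne_zero⟩
  have hN : (Fintype.card (Fin k → ZMod (p^n)) : ℝ≥0∞) ≠ 0 :=
    Nat.cast_ne_zero.mpr Fintype.card_ne_zero
  have hNtop : (Fintype.card (Fin k → ZMod (p^n)) : ℝ≥0∞) ≠ ⊤ := by simp
  rw [← one_mul (haarZk (p:=p) k (Vset n c)), ← ENNReal.inv_mul_cancel hN hNtop,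
    mul_assoc, h, mul_one]
end Meas

section Fsec
variable [Fact p.Prime] {k : ℕ} {F : (Fin k → ℤ_[p]) → (Fin k → ℤ_[p])}

lemma congModVec_map (hF : LipschitzWith 1 F) {n : ℕ} {x y : Fin k → ℤ_[p]}
    (h : CongModVec n x y) : CongModVec n (F x) (F y) := by
  rw [congModVec_iff_dist] at h ⊢
  calc dist (F x) (F y) ≤ 1 * dist x y := by simpa using hF.dist_le_mul x y
  _ ≤ (p : ℝ) ^ (-(n:ℤ)) := by rw [one_mul]; exact h

noncomputable def indF [Fact p.Prime] {k : ℕ} (F : (Fin k → ℤ_[p]) → (Fin k → ℤ_[p]))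
    (n : ℕ) : (Fin k → ZMod (p^n)) → (Fin k → ZMod (p^n)) :=
  fun c => redVec n (F (liftVec c))

lemma redVec_F (hF : LipschitzWith 1 F) (n : ℕ) (x : Fin k → ℤ_[p]) :
    redVec n (F x) = indF F n (redVec n x) := by
  have h : CongModVec n x (liftVec (redVec n x)) := by
    rw [congModVec_iff_redVec, redVec_liftVec]
  exact (congModVec_iff_redVec _ _ _).mp (congModVec_map hF h)

lemma preimage_redVec (hF : LipschitzWith 1 F) (n : ℕ) (s : Set (Fin k → ZMod (p^n))) :
    F ⁻¹' (redVec n ⁻¹' s) = redVec n ⁻¹' (indF F n ⁻¹' s) := by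
  ext x
  simp only [Set.mem_preimage, redVec_F hF]

lemma redVec_iterate (hF : LipschitzWith 1 F) (n j : ℕ) (x : Fin k → ℤ_[p]) :
    redVec n (F^[j] x) = (indF F n)^[j] (redVec n x) := by
  induction j with
  | zero => rfl
  | succ j ih => rw [Function.iterate_succ_apply', Function.iterate_succ_apply',
      redVec_F hF, ih]

lemma indF_injective (hF : LipschitzWith 1 F)
    (hmp : MeasurePreserving F (haarZk k) (haarZk k)) (n : ℕ) :
    Function.Injective (indF F n) := by
  intro a b hab
  by_contra hne
  set μ := haarZk (p:=p) k
  have hsub : Vset n a ∪ Vset n b ⊆ F ⁻¹' (Vset n (indF F n a)) := by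
    rw [show (Vset n (indF F n a) : Set (Fin k → ℤ_[p])) = redVec n ⁻¹' {indF F n a} from rfl,
      preimage_redVec hF]
    intro x hx
    rcases hx with hx | hx
    · rw [mem_Vset_iff] at hx
      simp [Set.mem_preimage, hx]
    · rw [mem_Vset_iff] at hx
      simp [Set.mem_preimage, hx, hab]
  have hpre : μ (F ⁻¹' (Vset n (indF F n a))) = μ (Vset n (indF F n a)) :=
    hmp.measure_preimage (measurableSet_Vset _).nullMeasurableSet
  have hunion : μ (Vset n a ∪ Vset n b) = μ (Vset n a) + μ (Vset n b) :=
    measure_union (Vset_disjoint n hne) (measurableSet_Vset _)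
  have h2 : μ (Vset n a) + μ (Vset n b) ≤ μ (Vset n (indF F n a)) := by
    rw [← hunion, ← hpre]
    exact measure_mono hsub
  rw [measure_Vset_eq n a (indF F n a), measure_Vset_eq n b (indF F n a)] at h2
  nth_rewrite 3 [← add_zero (μ (Vset n (indF F n a)))] at h2
  rw [ENNReal.add_le_add_iff_left (measure_Vset_ne_top _ _)] at h2
  exact measure_Vset_ne_zero n (indF F n a) (le_zero_iff.mp h2)

lemma indF_bijective (hF : LipschitzWith 1 F)
    (hmp : MeasurePreserving F (haarZk k) (haarZk k)) (n : ℕ) :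
    Function.Bijective (indF F n) := by
  have : NeZero (p ^ n) := ⟨pow_ne_zero _ (Fact.out : p.Prime).ne_zero⟩
  exact Finite.injective_iff_bijective.mp (indF_injective hF hmp n)

end Fsec

section Forward
variable [Fact p.Prime] {k : ℕ} {F : (Fin k → ℤ_[p]) → (Fin k → ℤ_[p])}

lemma indF_transitive_of_ergodic (hF : LipschitzWith 1 F) (hE : Ergodic F (haarZk k))
    (n : ℕ) (c c' : Fin k → ZMod (p^n)) : ∃ j : ℕ, (indF F n)^[j] c = c' := by
  have : NeZero (p ^ n) := ⟨pow_ne_zero _ (Fact.out : p.Prime).ne_zero⟩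
  set f := indF F n with hf
  set O : Set (Fin k → ZMod (p^n)) := {d | ∃ j : ℕ, f^[j] c = d} with hO
  have hcO : c ∈ O := ⟨0, rfl⟩
  have hbij := indF_bijective hF hE.toMeasurePreserving n
  have hfO : f '' O ⊆ O := by
    rintro _ ⟨d, ⟨j, rfl⟩, rfl⟩
    exact ⟨j + 1, Function.iterate_succ_apply' f j c⟩
  have himg : f '' O = O := by
    refine Set.eq_of_subset_of_ncard_le hfO ?_ (Set.toFinite O)
    rw [Set.ncard_image_of_injective O hbij.1]
  have hpreO : f ⁻¹' O = O := by
    nth_rewrite 1 [← himg]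
    exact Set.preimage_image_eq O hbij.1
  set S : Set (Fin k → ℤ_[p]) := redVec n ⁻¹' O with hSdef
  have hS : F ⁻¹' S = S := by rw [hSdef, preimage_redVec hF, hpreO]
  set T := (Set.toFinite O).toFinset with hT
  have hmemT : ∀ d, d ∈ T ↔ d ∈ O := fun d => Set.Finite.mem_toFinset _
  have hSeq : S = ⋃ d ∈ T, Vset n d := by
    ext x
    simp only [hSdef, Set.mem_preimage, Set.mem_iUnion, mem_Vset_iff, hmemT]
    constructor
    · intro h; exact ⟨redVec n x, h, rfl⟩
    · rintro ⟨d, hd, rfl⟩; exact hd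
  have hSm : MeasurableSet S := by
    rw [hSeq]; exact T.measurableSet_biUnion fun d _ => measurableSet_Vset d
  have hμS : haarZk (p:=p) k S = T.card * haarZk (p:=p) k (Vset n c) := by
    rw [hSeq, measure_biUnion_finset ?_ fun d _ => measurableSet_Vset d]
    · rw [Finset.sum_congr rfl fun d _ => measure_Vset_eq n d c]
      simp [Finset.sum_const, nsmul_eq_mul]
    · intro a _ b _ hab
      exact Vset_disjoint n hab
  have hμS1 : haarZk (p:=p) k S = 1 := by
    rcases hE.toPreErgodic.measure_self_or_compl_eq_zero hSm hS with h0 | h1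
    · exfalso
      have : haarZk (p:=p) k (Vset n c) = 0 := by
        refine le_antisymm ?_ zero_le
        rw [← h0]
        refine measure_mono fun x hx => ?_
        rw [mem_Vset_iff] at hx
        exact show redVec n x ∈ O by rw [hx]; exact hcO
      exact measure_Vset_ne_zero n c this
    · have := measure_add_measure_compl (μ := haarZk (p:=p) k) hSm
      rw [h1, add_zero, haarZk_univ] at this
      exact this
  -- deduce T.card = Fintype.card
  have hNcard : T.card = Fintype.card (Fin k → ZMod (p^n)) := by
    have h1 : (T.card : ℝ≥0∞) * (Fintype.card (Fin k → ZMod (p^n)) : ℝ≥0∞)⁻¹ = 1 := by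
      rw [← measure_Vset_val n c, ← hμS, hμS1]
    have hN : (Fintype.card (Fin k → ZMod (p^n)) : ℝ≥0∞) ≠ 0 :=
      Nat.cast_ne_zero.mpr Fintype.card_ne_zero
    have hNtop : (Fintype.card (Fin k → ZMod (p^n)) : ℝ≥0∞) ≠ ⊤ := by simp
    have : (T.card : ℝ≥0∞) = (Fintype.card (Fin k → ZMod (p^n)) : ℝ≥0∞) := by
      calc (T.card : ℝ≥0∞) = (T.card : ℝ≥0∞) * ((Fintype.card (Fin k → ZMod (p^n)) : ℝ≥0∞)⁻¹ *
            (Fintype.card (Fin k → ZMod (p^n)) : ℝ≥0∞)) := by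
            rw [ENNReal.inv_mul_cancel hN hNtop, mul_one]
        _ = _ := by rw [← mul_assoc, h1, one_mul]
    exact_mod_cast this
  have hOuniv : O = Set.univ := by
    have : T = Finset.univ := Finset.eq_univ_of_card T hNcard
    ext d
    simp only [Set.mem_univ, iff_true]
    rw [← hmemT, this]
    exact Finset.mem_univ d
  have : c' ∈ O := by rw [hOuniv]; trivial
  exact this

end Forward

section Basis
variable [Fact p.Prime] {k : ℕ}

def Bcoll [Fact p.Prime] (k : ℕ) : Set (Set (Fin k → ℤ_[p])) :=
  {s | ∃ (n : ℕ) (c : Fin k → ZMod (p^n)), s = Vset n c}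

lemma isTopologicalBasis_Bcoll :
    TopologicalSpace.IsTopologicalBasis (Bcoll (p:=p) k) := by
  refine TopologicalSpace.isTopologicalBasis_of_isOpen_of_nhds ?_ ?_
  · rintro s ⟨n, c, rfl⟩; exact isOpen_Vset c
  · intro x u hxu hu
    obtain ⟨ε, hε, hball⟩ := Metric.isOpen_iff.mp hu x hxu
    obtain ⟨n, hn⟩ := PadicInt.exists_pow_neg_lt p hε
    refine ⟨Vset n (redVec n x), ⟨n, _, rfl⟩, rfl, fun y hy => ?_⟩
    refine hball ?_
    rw [Metric.mem_ball]
    have : CongModVec n y x := by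
      rw [congModVec_iff_redVec]; exact hy
    exact lt_of_le_of_lt ((congModVec_iff_dist n y x).mp this) hn

lemma generateFrom_Bcoll :
    (inferInstance : MeasurableSpace (Fin k → ℤ_[p])) =
      MeasurableSpace.generateFrom (Bcoll (p:=p) k) :=
  BorelSpace.measurable_eq.trans isTopologicalBasis_Bcoll.borel_eq_generateFrom

lemma congModVec_mono {n m : ℕ} (h : n ≤ m) {x y : Fin k → ℤ_[p]}
    (hc : CongModVec m x y) : CongModVec n x y := fun i => congMod_mono h (hc i)

lemma Vset_subset_of_le {n m : ℕ} (h : n ≤ m) {c : Fin k → ZMod (p^n)}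
    {c' : Fin k → ZMod (p^m)} (hne : (Vset n c ∩ Vset m c').Nonempty) :
    Vset m c' ⊆ Vset n c := by
  obtain ⟨z, hz1, hz2⟩ := hne
  rw [mem_Vset_iff] at hz1 hz2
  intro y hy
  rw [mem_Vset_iff] at hy ⊢
  have : CongModVec m y z := by rw [congModVec_iff_redVec, hy, hz2]
  have := congModVec_mono h this
  rw [congModVec_iff_redVec] at this
  rw [this, hz1]

lemma isPiSystem_Bcoll : IsPiSystem (Bcoll (p:=p) k) := by
  rintro s ⟨n, c, rfl⟩ t ⟨m, c', rfl⟩ hst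
  rcases le_total n m with h | h
  · have := Vset_subset_of_le h hst
    rw [Set.inter_eq_right.mpr this]
    exact ⟨m, c', rfl⟩
  · rw [Set.inter_comm] at hst
    have := Vset_subset_of_le h hst
    rw [Set.inter_eq_left.mpr this]
    exact ⟨n, c, rfl⟩

end Basis

section Backward
variable [Fact p.Prime] {k : ℕ} {F : (Fin k → ℤ_[p]) → (Fin k → ℤ_[p])}

lemma indF_trans_all (hF : LipschitzWith 1 F)
    (htrans : ∀ n : ℕ, 1 ≤ n → IsTransitiveModVec F n) (n : ℕ)
    (c c' : Fin k → ZMod (p^n)) : ∃ j : ℕ, (indF F n)^[j] c = c' := by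
  rcases Nat.eq_zero_or_pos n with rfl | hn
  · refine ⟨0, ?_⟩
    have : Subsingleton (ZMod (p^0)) := by rw [pow_zero]; infer_instance
    funext i; exact Subsingleton.elim _ _
  · obtain ⟨j, hj⟩ := htrans n hn (liftVec c) (liftVec c')
    refine ⟨j, ?_⟩
    have h2 := (congModVec_iff_redVec _ _ _).mp hj
    rw [redVec_iterate hF, redVec_liftVec, redVec_liftVec] at h2
    exact h2

lemma ergodic_of_transitive (hF : LipschitzWith 1 F)
    (hmp : MeasurePreserving F (haarZk k) (haarZk k))
    (htrans : ∀ n : ℕ, 1 ≤ n → IsTransitiveModVec F n) : Ergodic F (haarZk k) := by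
  refine ⟨hmp, ⟨fun s hsm hs => ?_⟩⟩
  rw [Filter.eventuallyConst_set']
  set μ := haarZk (p:=p) k with hμ
  have key : ∀ (n : ℕ) (c : Fin k → ZMod (p^n)),
      μ (s ∩ Vset n c) = μ s * μ (Vset n c) := by
    intro n c₀
    have : NeZero (p ^ n) := ⟨pow_ne_zero _ (Fact.out : p.Prime).ne_zero⟩
    have hN : (Fintype.card (Fin k → ZMod (p^n)) : ℝ≥0∞) ≠ 0 :=
      Nat.cast_ne_zero.mpr Fintype.card_ne_zero
    have hNtop : (Fintype.card (Fin k → ZMod (p^n)) : ℝ≥0∞) ≠ ⊤ := by simp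
    set f := indF F n with hfdef
    have hstep : ∀ c, μ (s ∩ Vset n c) ≤ μ (s ∩ Vset n (f c)) := by
      intro c
      have hsub : s ∩ Vset n c ⊆ F ⁻¹' (s ∩ Vset n (f c)) := by
        rintro x ⟨hxs, hxV⟩
        rw [mem_Vset_iff] at hxV
        constructor
        · show F x ∈ s
          have : x ∈ F ⁻¹' s := by rw [hs]; exact hxs
          exact this
        · show F x ∈ Vset n (f c)
          rw [mem_Vset_iff, redVec_F hF, hxV]
      calc μ (s ∩ Vset n c) ≤ μ (F ⁻¹' (s ∩ Vset n (f c))) := measure_mono hsub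
        _ = μ (s ∩ Vset n (f c)) :=
          hmp.measure_preimage (hsm.inter (measurableSet_Vset _)).nullMeasurableSet
    have hiter : ∀ c (j : ℕ), μ (s ∩ Vset n c) ≤ μ (s ∩ Vset n (f^[j] c)) := by
      intro c j
      induction j with
      | zero => exact le_refl _
      | succ j ih =>
        rw [Function.iterate_succ_apply']
        exact ih.trans (hstep _)
    have hconst : ∀ c c', μ (s ∩ Vset n c) = μ (s ∩ Vset n c') := by
      intro c c'
      obtain ⟨j1, h1⟩ := indF_trans_all hF htrans n c c'
      obtain ⟨j2, h2⟩ := indF_trans_all hF htrans n c' c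
      refine le_antisymm ?_ ?_
      · have := hiter c j1; rwa [h1] at this
      · have := hiter c' j2; rwa [h2] at this
    have hsum : μ s = (Fintype.card (Fin k → ZMod (p^n)) : ℝ≥0∞) * μ (s ∩ Vset n c₀) := by
      have hdecomp : s = ⋃ c : Fin k → ZMod (p^n), s ∩ Vset n c := by
        rw [← Set.inter_iUnion, iUnion_Vset, Set.inter_univ]
      nth_rewrite 1 [hdecomp]
      rw [measure_iUnion ?_ fun c => hsm.inter (measurableSet_Vset c), tsum_fintype,
        Finset.sum_congr rfl fun c _ => hconst c c₀]
      · simp [Finset.sum_const, nsmul_eq_mul]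
      · intro a b hab
        exact (Vset_disjoint n hab).mono Set.inter_subset_right Set.inter_subset_right
    rw [measure_Vset_val, hsum, mul_comm, ← mul_assoc, ENNReal.inv_mul_cancel hN hNtop, one_mul]
  have hext : μ.restrict s = μ s • μ := by
    refine ext_of_generate_finite (Bcoll (p:=p) k) generateFrom_Bcoll isPiSystem_Bcoll ?_ ?_
    · rintro t ⟨n, c, rfl⟩
      rw [Measure.restrict_apply (measurableSet_Vset c), Set.inter_comm, key n c]
      simp [Measure.smul_apply, smul_eq_mul]
    · rw [Measure.restrict_apply MeasurableSet.univ, Set.univ_inter]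
      simp [Measure.smul_apply, smul_eq_mul, haarZk_univ]
  have hEq : μ s = μ s * μ s := by
    have h1 : μ.restrict s s = (μ s • μ) s := by rw [hext]
    rwa [Measure.restrict_apply hsm, Set.inter_self, Measure.smul_apply, smul_eq_mul] at h1
  rcases eq_or_ne (μ s) 0 with h0 | h0
  · left; exact ae_eq_empty.mpr h0
  · right
    have htop : μ s ≠ ⊤ := (measure_lt_top μ s).ne
    have hs1 : μ s = 1 := by
      nth_rewrite 1 [← mul_one (μ s)] at hEq
      exact ((ENNReal.mul_right_inj h0 htop).mp hEq).symm
    rw [ae_eq_univ]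
    have hc := measure_add_measure_compl (μ := μ) hsm
    rw [hs1, haarZk_univ] at hc
    nth_rewrite 2 [← add_zero (1 : ℝ≥0∞)] at hc
    exact (ENNReal.add_right_inj ENNReal.one_ne_top).mp hc

end Backward


theorem stmt7 [Fact p.Prime] {k : ℕ}
    (F : (Fin k → ℤ_[p]) → (Fin k → ℤ_[p])) (hF : LipschitzWith 1 F)
    (hmp : MeasurePreserving F (haarZk k) (haarZk k)) :
    Ergodic F (haarZk k) ↔ ∀ n : ℕ, 1 ≤ n → IsTransitiveModVec F n := by
  constructor
  · intro hE n _hn x y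
    obtain ⟨j, hj⟩ := indF_transitive_of_ergodic hF hE n (redVec n x) (redVec n y)
    refine ⟨j, ?_⟩
    rw [congModVec_iff_redVec, redVec_iterate hF, hj]
  · intro htrans
    exact ergodic_of_transitive hF hmp htrans
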